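/- Let Q = ∑_{i=1}^r p_i M_i where (p₁, …, p_r) is a probability vector and M₁, …, M_r are permutation matrices of permutations σ₁, …, σ_r ∈ S_n. Let S = {x ∈ [n] : ∃ i ≠ j, σ_i(x) = σ_j(x)}. Then the normalized Hilbert–Schmidt norm satisfies ‖Q‖_HS ≤ sqrt(∑_i p_i²) + sqrt(|S|/n). In particular, if S = ∅, then ‖Q‖_HS = sqrt(∑_i p_i²). -/

import Mathlib

lemma sqrt_add_le' {a b : ℝ} (ha : 0 ≤ a) (hb : 0 ≤ b) :
    Real.sqrt (a + b) ≤ Real.sqrt a + Real.sqrt b := by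
  rw [← Real.sqrt_sq (by positivity : (0:ℝ) ≤ Real.sqrt a + Real.sqrt b)]
  apply Real.sqrt_le_sqrt
  nlinarith [Real.sq_sqrt ha, Real.sq_sqrt hb, Real.sqrt_nonneg a, Real.sqrt_nonneg b]

/-- For `Q = ∑ pᵢ Mᵢ` a convex combination of permutation matrices,
`‖Q‖_HS ≤ sqrt(∑ pᵢ²) + sqrt(|S|/n)`, with equality `‖Q‖_HS = sqrt(∑ pᵢ²)` when `S = ∅`,
where `S = {x : ∃ i ≠ j, σᵢ(x) = σⱼ(x)}`. -/
theorem stmt10 (n r : ℕ) (hn : 0 < n) (p : Fin r → ℝ)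
    (hp0 : ∀ i, 0 ≤ p i) (hp1 : ∑ i, p i = 1)
    (σ : Fin r → Equiv.Perm (Fin n))
    (Q : Matrix (Fin n) (Fin n) ℝ)
    (hQ : ∀ x y, Q x y = ∑ i, p i * (if σ i x = y then 1 else 0)) :
    Real.sqrt ((1 / n) * ∑ x, ∑ y, Q x y ^ 2)
      ≤ Real.sqrt (∑ i, p i ^ 2) +
        Real.sqrt (((Finset.univ.filter
          (fun x : Fin n => ∃ i j, i ≠ j ∧ σ i x = σ j x)).card : ℝ) / n) ∧
    ((Finset.univ.filter (fun x : Fin n => ∃ i j, i ≠ j ∧ σ i x = σ j x)) = ∅ →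
      Real.sqrt ((1 / n) * ∑ x, ∑ y, Q x y ^ 2) = Real.sqrt (∑ i, p i ^ 2)) := by
  set S := Finset.univ.filter (fun x : Fin n => ∃ i j, i ≠ j ∧ σ i x = σ j x) with hS
  have hnR : (0:ℝ) < n := by exact_mod_cast hn
  -- rewrite the row sums
  have key : ∀ x, ∑ y, Q x y ^ 2
      = ∑ i, ∑ j, p i * p j * (if σ i x = σ j x then (1:ℝ) else 0) := by
    intro x
    simp_rw [hQ, sq, Finset.sum_mul_sum]
    rw [Finset.sum_comm]
    refine Finset.sum_congr rfl fun i _ => ?_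
    rw [Finset.sum_comm]
    refine Finset.sum_congr rfl fun j _ => ?_
    simp_rw [mul_mul_mul_comm]
    rw [← Finset.mul_sum]
    congr 1
    simp only [ite_mul, one_mul, zero_mul]
    rw [Finset.sum_ite_eq Finset.univ (σ i x) (fun y => if σ j x = y then (1:ℝ) else 0)]
    simp [eq_comm]
  have psq_nonneg : (0:ℝ) ≤ ∑ i, p i ^ 2 := Finset.sum_nonneg fun i _ => sq_nonneg _
  have diag : ∀ x : Fin n, x ∉ S →
      ∑ i, ∑ j, p i * p j * (if σ i x = σ j x then (1:ℝ) else 0) = ∑ i, p i ^ 2 := by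
    intro x hx
    have hne : ∀ i j, i ≠ j → σ i x ≠ σ j x := fun i j hij h =>
      hx (Finset.mem_filter.mpr ⟨Finset.mem_univ x, i, j, hij, h⟩)
    refine Finset.sum_congr rfl fun i _ => ?_
    rw [Finset.sum_eq_single i]
    · simp [sq]
    · intro j _ hji
      simp [hne i j (Ne.symm hji)]
    · simp
  have bound : ∀ x : Fin n,
      ∑ i, ∑ j, p i * p j * (if σ i x = σ j x then (1:ℝ) else 0) ≤ 1 := by
    intro x
    have : ∑ i, ∑ j, p i * p j * (if σ i x = σ j x then (1:ℝ) else 0)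
        ≤ ∑ i, ∑ j, p i * p j := by
      refine Finset.sum_le_sum fun i _ => Finset.sum_le_sum fun j _ => ?_
      have : (if σ i x = σ j x then (1:ℝ) else 0) ≤ 1 := by split <;> norm_num
      nlinarith [hp0 i, hp0 j, mul_nonneg (hp0 i) (hp0 j)]
    calc _ ≤ ∑ i, ∑ j, p i * p j := this
      _ = (∑ i, p i) * (∑ j, p j) := by rw [Finset.sum_mul_sum]
      _ = 1 := by rw [hp1]; ring
  have total_le : ∑ x, ∑ y, Q x y ^ 2 ≤ n * (∑ i, p i ^ 2) + S.card := by
    calc ∑ x, ∑ y, Q x y ^ 2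
        = ∑ x : Fin n, ∑ i, ∑ j, p i * p j * (if σ i x = σ j x then (1:ℝ) else 0) :=
          Finset.sum_congr rfl fun x _ => key x
      _ ≤ ∑ x : Fin n, ((∑ i, p i ^ 2) + if x ∈ S then (1:ℝ) else 0) := by
          refine Finset.sum_le_sum fun x _ => ?_
          by_cases hx : x ∈ S
          · simp only [hx, if_pos]
            calc _ ≤ (1:ℝ) := bound x
              _ ≤ _ := by linarith
          · rw [diag x hx]; simp [hx]
      _ = n * (∑ i, p i ^ 2) + S.card := by
          rw [Finset.sum_add_distrib, Finset.sum_const, Finset.sum_ite_mem,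
            Finset.univ_inter, Finset.sum_const]
          simp [mul_comm]
  constructor
  · have h1 : (1 / (n:ℝ)) * ∑ x, ∑ y, Q x y ^ 2 ≤ (∑ i, p i ^ 2) + (S.card : ℝ) / n := by
      have he : (1 / (n:ℝ)) * ∑ x, ∑ y, Q x y ^ 2 = (∑ x, ∑ y, Q x y ^ 2) / n := by ring
      rw [he, div_le_iff₀ hnR]
      have h3 : ((∑ i, p i ^ 2) + (S.card : ℝ) / n) * n = n * (∑ i, p i ^ 2) + S.card := by
        field_simp
      rw [h3]; exact total_le
    calc Real.sqrt ((1 / n) * ∑ x, ∑ y, Q x y ^ 2)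
        ≤ Real.sqrt ((∑ i, p i ^ 2) + (S.card : ℝ) / n) := Real.sqrt_le_sqrt h1
      _ ≤ _ := sqrt_add_le' psq_nonneg (by positivity)
  · intro hSe
    have h2 : (1 / (n:ℝ)) * ∑ x, ∑ y, Q x y ^ 2 = ∑ i, p i ^ 2 := by
      have : ∑ x, ∑ y, Q x y ^ 2 = n * (∑ i, p i ^ 2) := by
        calc ∑ x, ∑ y, Q x y ^ 2
            = ∑ x : Fin n, ∑ i, p i ^ 2 := Finset.sum_congr rfl fun x _ => by
              rw [key x, diag x (by simp [hSe])]
          _ = n * (∑ i, p i ^ 2) := by simp [Finset.sum_const, mul_comm]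
      rw [this]
      field_simp
    rw [h2]
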